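/- If a lattice Y in V satisfies (Y, P) ⊆ ℤ, where P is the weight lattice of R, then l(t_y) is even for every y ∈ Y. -/

import Mathlib

open scoped RealInnerProductSpace

/-- if the lattice element y pairs integrally with the weight lattice
P = {p : (p, α∨) ∈ ℤ for all roots α}, then l(t_y) = Σ_{α∈R⁺} |(y,α)| is even.
R is a finite reduced crystallographic root system, closed under its reflections,
with positive system R⁺ cut out by a generic linear functional (·,f). -/
theorem stmt5 {V : Type*} [NormedAddCommGroup V] [InnerProductSpace ℝ V]
    (R Rplus : Finset V)
    (hR : ∀ α : V, α ∈ R ↔ (α ∈ Rplus ∨ -α ∈ Rplus))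
    (hdisj : ∀ α ∈ Rplus, -α ∉ Rplus)
    (h0 : (0 : V) ∉ R)
    (hrefl : ∀ α ∈ R, ∀ β ∈ R, β - ((2 * ⟪β, α⟫ / ⟪α, α⟫) • α) ∈ R)
    (hred : ∀ α ∈ R, (2 : ℝ) • α ∉ R)
    (hcrys : ∀ α ∈ R, ∀ β ∈ R, ∃ z : ℤ, 2 * ⟪α, β⟫ / ⟪β, β⟫ = (z : ℝ))
    (f : V) (hf : ∀ α ∈ R, (α ∈ Rplus ↔ 0 < ⟪f, α⟫))
    (y : V)
    (hy : ∀ p : V, (∀ α ∈ R, ∃ z : ℤ, 2 * ⟪p, α⟫ / ⟪α, α⟫ = (z : ℝ)) →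
      ∃ z : ℤ, ⟪y, p⟫ = (z : ℝ)) :
    ∃ z : ℤ, ∑ α ∈ Rplus, |⟪y, α⟫| = 2 * (z : ℝ) := by
  classical
  have hRsub : ∀ a ∈ Rplus, a ∈ R := fun a ha => (hR a).mpr (Or.inl ha)
  have hRneg : ∀ a ∈ R, -a ∈ R := by
    intro a ha
    rw [hR] at ha ⊢
    rcases ha with h | h
    · exact Or.inr (by simpa using h)
    · exact Or.inl h
  have hne0 : ∀ b ∈ R, b ≠ 0 := by
    intro b hb hb0
    exact h0 (hb0 ▸ hb)
  have hnz : ∀ b ∈ R, ⟪b, b⟫ ≠ (0 : ℝ) := by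
    intro b hb h
    exact hne0 b hb (inner_self_eq_zero.mp h)
  -- KEY: for each root b, the sum over Rplus of the pairings with b∨ is an even integer
  have key : ∀ b ∈ R, ∃ m : ℤ, ∑ a ∈ Rplus, 2 * ⟪a, b⟫ / ⟪b, b⟫ = 2 * (m : ℝ) := by
    intro b hb
    have hbb := hnz b hb
    -- integer valued pairing with b∨
    set c : V → ℤ := fun a => if h : a ∈ R then (hcrys a h b hb).choose else 0 with hcdef
    have hcval : ∀ a ∈ R, 2 * ⟪a, b⟫ / ⟪b, b⟫ = ((c a : ℤ) : ℝ) := by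
      intro a ha
      simp only [hcdef, dif_pos ha]
      exact (hcrys a ha b hb).choose_spec
    -- the reflection in b
    set s : V → V := fun x => x - (2 * ⟪x, b⟫ / ⟪b, b⟫) • b with hsdef
    have hsb : ∀ x, ⟪s x, b⟫ = -⟪x, b⟫ := by
      intro x
      simp only [hsdef, inner_sub_left, real_inner_smul_left]
      field_simp
      ring
    have hss : ∀ x, s (s x) = x := by
      intro x
      have h1 : s (s x) = s x - (2 * ⟪s x, b⟫ / ⟪b, b⟫) • b := rfl
      rw [h1, hsb x]
      have h2 : 2 * -⟪x, b⟫ / ⟪b, b⟫ = -(2 * ⟪x, b⟫ / ⟪b, b⟫) := by ring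
      rw [h2, neg_smul, sub_neg_eq_add]
      simp only [hsdef, sub_add_cancel]
    have hsneg : ∀ x, s (-x) = -(s x) := by
      intro x
      simp only [hsdef, inner_neg_left]
      rw [show 2 * -⟪x, b⟫ / ⟪b, b⟫ = -(2 * ⟪x, b⟫ / ⟪b, b⟫) by ring, neg_smul,
        sub_neg_eq_add, neg_sub]
      abel
    have hsR : ∀ a ∈ R, s a ∈ R := fun a ha => hrefl b hb a ha
    have hcs : ∀ a ∈ R, c (s a) = -(c a) := by
      intro a ha
      have h1 : ((c (s a) : ℤ) : ℝ) = -((c a : ℤ) : ℝ) := by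
        rw [← hcval _ (hsR a ha), hsb, ← hcval a ha]; ring
      exact_mod_cast h1
    have hcneg : ∀ a ∈ R, c (-a) = -(c a) := by
      intro a ha
      have h1 : ((c (-a) : ℤ) : ℝ) = -((c a : ℤ) : ℝ) := by
        rw [← hcval _ (hRneg a ha), inner_neg_left, ← hcval a ha]; ring
      exact_mod_cast h1
    -- parity via involution
    have hpar : ((∑ a ∈ Rplus, c a : ℤ) : ZMod 2) = 0 := by
      rw [Int.cast_sum]
      refine Finset.sum_involution (fun a _ => if s a ∈ Rplus then s a else -(s a))
        ?_ ?_ ?_ ?_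
      · -- f a + f (g a) = 0 in ZMod 2
        intro a ha
        by_cases h : s a ∈ Rplus
        · simp only [if_pos h]
          rw [hcs a (hRsub a ha)]
          push_cast
          ring
        · simp only [if_neg h]
          rw [hcneg _ (hsR a (hRsub a ha)), hcs a (hRsub a ha), neg_neg]
          have : ((c a : ℤ) : ZMod 2) + ((c a : ℤ) : ZMod 2) = ((2 * c a : ℤ) : ZMod 2) := by
            push_cast; ring
          rw [this]
          exact (ZMod.intCast_zmod_eq_zero_iff_dvd _ 2).mpr ⟨c a, rfl⟩
      · -- fixed points have f a = 0
        intro a ha hfa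
        intro hfix
        replace hfix : (if s a ∈ Rplus then s a else -(s a)) = a := hfix
        apply hfa
        have haR := hRsub a ha
        by_cases h : s a ∈ Rplus
        · rw [if_pos h] at hfix
          -- s a = a forces pairing 0
          have h1 : (2 * ⟪a, b⟫ / ⟪b, b⟫) • b = 0 := by
            have := hfix
            simp only [hsdef] at this
            have := sub_eq_self.mp this
            exact this
          have h2 : 2 * ⟪a, b⟫ / ⟪b, b⟫ = 0 := by
            rcases smul_eq_zero.mp h1 with h | h
            · exact h
            · exact absurd h (hne0 b hb)
          have h3 : ((c a : ℤ) : ℝ) = 0 := by rw [← hcval a haR, h2]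
          have h4 : c a = 0 := by exact_mod_cast h3
          rw [h4]; simp
        · rw [if_neg h] at hfix
          -- s a = -a : a is proportional to b
          have h1 : s a = -a := neg_eq_iff_eq_neg.mp hfix
          have h2 : a + a = ((c a : ℤ) : ℝ) • b := by
            have h3 : a - ((c a : ℤ) : ℝ) • b = -a := by
              rw [← hcval a haR]; exact h1
            have h4 : a + a = (a - ((c a : ℤ) : ℝ) • b) + (((c a : ℤ) : ℝ) • b + a) := by
              abel
            rw [h4, h3]
            abel
          have hcane : c a ≠ 0 := by
            intro hc0
            rw [hc0] at h2
            simp only [Int.cast_zero, zero_smul] at h2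
            have h2' : (2 : ℝ) • a = 0 := by rw [two_smul]; exact h2
            rcases smul_eq_zero.mp h2' with h' | h'
            · norm_num at h'
            · exact hne0 a haR h'
          obtain ⟨z', hz'⟩ := hcrys b hb a haR
          have haanz := hnz a haR
          -- compute inner products from h2
          have hba : ⟪b, a⟫ + ⟪b, a⟫ = ((c a : ℤ) : ℝ) * ⟪b, b⟫ := by
            have h5 : ⟪b, a + a⟫ = ⟪b, ((c a : ℤ) : ℝ) • b⟫ := by rw [h2]
            simpa [inner_add_right, real_inner_smul_right] using h5
          have haa : 4 * ⟪a, a⟫ = ((c a : ℤ) : ℝ) ^ 2 * ⟪b, b⟫ := by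
            have h5 : ⟪a + a, a + a⟫ = ⟪((c a : ℤ) : ℝ) • b, ((c a : ℤ) : ℝ) • b⟫ := by
              rw [h2]
            simp only [inner_add_left, inner_add_right, real_inner_smul_left,
              real_inner_smul_right] at h5
            nlinarith [h5]
          have hz'2 : 2 * ⟪b, a⟫ = (z' : ℝ) * ⟪a, a⟫ := by
            field_simp at hz'
            linarith
          have hzz : ((c a : ℤ) : ℝ) * (z' : ℝ) * ⟪a, a⟫ = 4 * ⟪a, a⟫ := by
            have e1 : (z' : ℝ) * ⟪a, a⟫ = ((c a : ℤ) : ℝ) * ⟪b, b⟫ := by linarith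
            calc ((c a : ℤ) : ℝ) * (z' : ℝ) * ⟪a, a⟫
                = ((c a : ℤ) : ℝ) * ((z' : ℝ) * ⟪a, a⟫) := by ring
              _ = ((c a : ℤ) : ℝ) * (((c a : ℤ) : ℝ) * ⟪b, b⟫) := by rw [e1]
              _ = ((c a : ℤ) : ℝ) ^ 2 * ⟪b, b⟫ := by ring
              _ = 4 * ⟪a, a⟫ := haa.symm
          have hzzR : ((c a : ℤ) : ℝ) * (z' : ℝ) = 4 :=
            mul_right_cancel₀ haanz hzz
          have hzzI : c a * z' = 4 := by exact_mod_cast hzzR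
          have hdvd4 : c a ∣ 4 := ⟨z', hzzI.symm⟩
          have hub : c a ≤ 4 := Int.le_of_dvd (by norm_num) hdvd4
          have hlb : -4 ≤ c a := by
            have := Int.le_of_dvd (show (0:ℤ) < 4 by norm_num) ((neg_dvd).mpr hdvd4)
            linarith
          set k : ℤ := c a with hk
          clear_value k
          interval_cases k
          · -- k = -4 : then 2•b = -a ∈ R, contradicting reducedness
            exfalso
            push_cast at h2
            have hb2 : (2 : ℝ) • b = -a := by
              have e2 : (2:ℝ) • ((2:ℝ) • b) = (2:ℝ) • (-a) := by
                rw [smul_smul, two_smul]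
                norm_num
                rw [show ((4:ℝ)) • b = -((-4:ℝ) • b) by rw [neg_smul, neg_neg], ← h2]
                abel
              exact smul_right_injective V two_ne_zero e2
            exact hred b hb (hb2 ▸ hRneg a haR)
          · omega
          · -- k = -2
            decide
          · -- k = -1 : then 2•a = -b ∈ R
            exfalso
            push_cast at h2
            have hb2 : (2 : ℝ) • a = -b := by
              rw [two_smul, h2, neg_smul, one_smul]
            exact hred a haR (hb2 ▸ hRneg b hb)
          · omega
          · -- k = 1 : then 2•a = b ∈ R
            exfalso
            push_cast at h2
            have hb2 : (2 : ℝ) • a = b := by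
              rw [two_smul, h2, one_smul]
            exact hred a haR (hb2 ▸ hb)
          · -- k = 2
            decide
          · omega
          · -- k = 4 : then 2•b = a ∈ R
            exfalso
            push_cast at h2
            have hb2 : (2 : ℝ) • b = a := by
              have e2 : (2:ℝ) • ((2:ℝ) • b) = (2:ℝ) • a := by
                rw [smul_smul, two_smul]
                norm_num
                rw [← h2]
              exact smul_right_injective V two_ne_zero e2
            exact hred b hb (hb2 ▸ haR)
      · -- g maps into Rplus
        intro a ha
        by_cases h : s a ∈ Rplus
        · rw [if_pos h]; exact h
        · rw [if_neg h]
          have hsaR : s a ∈ R := hsR a (hRsub a ha)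
          rcases (hR (s a)).mp hsaR with h' | h'
          · exact absurd h' h
          · exact h'
      · -- involution
        intro a ha
        by_cases h : s a ∈ Rplus
        · rw [if_pos h]
          have : s (s a) = a := hss a
          rw [if_pos (by rw [this]; exact ha), this]
        · rw [if_neg h]
          have h1 : s (-(s a)) = -a := by rw [hsneg, hss]
          rw [if_neg (by rw [h1]; exact hdisj a ha), h1, neg_neg]
    have hdvd : (2 : ℤ) ∣ ∑ a ∈ Rplus, c a := by
      exact_mod_cast (ZMod.intCast_zmod_eq_zero_iff_dvd _ 2).mp hpar
    obtain ⟨m, hm⟩ := hdvd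
    refine ⟨m, ?_⟩
    calc ∑ a ∈ Rplus, 2 * ⟪a, b⟫ / ⟪b, b⟫ = ∑ a ∈ Rplus, ((c a : ℤ) : ℝ) :=
          Finset.sum_congr rfl fun a ha => hcval a (hRsub a ha)
      _ = ((∑ a ∈ Rplus, c a : ℤ) : ℝ) := by push_cast; ring
      _ = 2 * (m : ℝ) := by rw [hm]; push_cast; ring
  -- the half-sum of positive roots pairs integrally with all coroots
  set p : V := (2 : ℝ)⁻¹ • ∑ a ∈ Rplus, a with hpdef
  have hp : ∀ b ∈ R, ∃ z : ℤ, 2 * ⟪p, b⟫ / ⟪b, b⟫ = (z : ℝ) := by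
    intro b hb
    obtain ⟨m, hm⟩ := key b hb
    refine ⟨m, ?_⟩
    have hbb := hnz b hb
    have h1 : ⟪p, b⟫ = (2 : ℝ)⁻¹ * ∑ a ∈ Rplus, ⟪a, b⟫ := by
      rw [hpdef, real_inner_smul_left, sum_inner]
    have h2 : ∑ a ∈ Rplus, 2 * ⟪a, b⟫ / ⟪b, b⟫
        = 2 * (∑ a ∈ Rplus, ⟪a, b⟫) / ⟪b, b⟫ := by
      rw [Finset.mul_sum, Finset.sum_div]
    rw [h2] at hm
    rw [h1]
    field_simp at hm ⊢
    linarith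
  obtain ⟨z0, hz0⟩ := hy p hp
  have hyS : ∑ a ∈ Rplus, ⟪y, a⟫ = 2 * (z0 : ℝ) := by
    have h1 : ⟪y, p⟫ = (2 : ℝ)⁻¹ * ∑ a ∈ Rplus, ⟪y, a⟫ := by
      rw [hpdef, real_inner_smul_right, inner_sum]
    rw [h1] at hz0
    linarith
  -- integer values of the pairings with y
  have hNex : ∀ a ∈ R, ∃ z : ℤ, ⟪y, a⟫ = (z : ℝ) :=
    fun a ha => hy a (fun b hb => hcrys a ha b hb)
  set N : V → ℤ := fun a => if h : a ∈ R then (hNex a h).choose else 0 with hNdef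
  have hNval : ∀ a ∈ R, ⟪y, a⟫ = ((N a : ℤ) : ℝ) := by
    intro a ha
    simp only [hNdef, dif_pos ha]
    exact (hNex a ha).choose_spec
  have hsumN : (∑ a ∈ Rplus, N a) = 2 * z0 := by
    have h1 : ((∑ a ∈ Rplus, N a : ℤ) : ℝ) = ((2 * z0 : ℤ) : ℝ) := by
      push_cast
      rw [← hyS]
      exact (Finset.sum_congr rfl fun a ha => (hNval a (hRsub a ha)).symm)
    exact_mod_cast h1
  have habs : ((∑ a ∈ Rplus, |N a| : ℤ) : ZMod 2) = 0 := by
    rw [Int.cast_sum]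
    have h1 : ∀ a ∈ Rplus, ((|N a| : ℤ) : ZMod 2) = ((N a : ℤ) : ZMod 2) := by
      intro a _
      rcases abs_choice (N a) with h | h
      · rw [h]
      · rw [h]; push_cast; ring_nf
        have : (2 : ZMod 2) = 0 := rfl
        rw [show (-(N a : ZMod 2)) = (N a : ZMod 2) - 2 * (N a : ZMod 2) by ring, this]
        ring
    rw [Finset.sum_congr rfl h1, ← Int.cast_sum, hsumN]
    push_cast
    rw [show ((2 : ZMod 2)) = 0 from rfl]
    ring
  have hdvd : (2 : ℤ) ∣ ∑ a ∈ Rplus, |N a| :=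
    (ZMod.intCast_zmod_eq_zero_iff_dvd _ 2).mp habs
  obtain ⟨z, hz⟩ := hdvd
  refine ⟨z, ?_⟩
  calc ∑ a ∈ Rplus, |⟪y, a⟫| = ∑ a ∈ Rplus, ((|N a| : ℤ) : ℝ) := by
        refine Finset.sum_congr rfl fun a ha => ?_
        rw [hNval a (hRsub a ha)]
        exact (Int.cast_abs ..).symm
    _ = ((∑ a ∈ Rplus, |N a| : ℤ) : ℝ) := by push_cast; ring
    _ = 2 * (z : ℝ) := by rw [hz]; push_cast; ring
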